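/- arXiv:2207.06773 — 2 statements merged into one kernel-verified Lean document; each statement's English description precedes it below -/
import Mathlib

section
/- Let L be an essentially standard pole space and let M ⊇ L be a pole space containing L. Then there exist an element w_M of the parabolic subgroup W(Δ̂(L)) of W generated by the reflections in the simple coroots Δ̂(L) of R̂_L, and a standard pole space M_0, such that M = w_M(M_0). -/
open scoped RealInnerProductSpace Classical

/-- A reduced crystallographic root system of "coroots" in a finite-dimensional real inner
product space, with a fixed positive system and base of simple coroots.  Each coroot `a` is
regarded as the linear functional `v ↦ ⟪a, v⟫` via the inner product. -/
structure CorootSystem (V : Type*) [NormedAddCommGroup V] [InnerProductSpace ℝ V]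
    [FiniteDimensional ℝ V] where
  Rhat : Finset V
  pos : Finset V
  simples : Finset V
  pos_subset : pos ⊆ Rhat
  simples_subset : simples ⊆ pos
  ne_zero : ∀ a ∈ Rhat, a ≠ 0
  union_eq : Rhat = pos ∪ pos.image (fun a => -a)
  pos_neg_disj : ∀ a ∈ pos, -a ∉ pos
  reduced : ∀ a ∈ Rhat, ∀ t : ℝ, t • a ∈ Rhat → t = 1 ∨ t = -1
  crystallographic : ∀ a ∈ Rhat, ∀ b ∈ Rhat, ∃ k : ℤ, 2 * ⟪a, b⟫ / ⟪a, a⟫ = (k : ℝ)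
  refl_mem : ∀ a ∈ Rhat, ∀ b ∈ Rhat, b - (2 * ⟪a, b⟫ / ⟪a, a⟫) • a ∈ Rhat
  simples_indep : LinearIndependent ℝ (fun a : {x // x ∈ simples} => (a : V))
  pos_comb : ∀ b ∈ pos, ∃ c : V → ℕ, b = ∑ a ∈ simples, (c a : ℝ) • a

namespace CorootSystem

variable {V : Type*} [NormedAddCommGroup V] [InnerProductSpace ℝ V] [FiniteDimensional ℝ V]

/-- The reflections attached to a set `D` of (co)roots, as linear automorphisms of `V`. -/
def reflectionsIn (D : Finset V) : Set (V ≃ₗ[ℝ] V) :=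
  {g | ∃ a ∈ D, ∀ v, g v = v - (2 * ⟪a, v⟫ / ⟪a, a⟫) • a}

/-- The Weyl group `W`, generated by the reflections in all the coroots. -/
def weyl (S : CorootSystem V) : Subgroup (V ≃ₗ[ℝ] V) :=
  Subgroup.closure (reflectionsIn S.Rhat)

/-- The parabolic subgroup generated by the reflections in the coroots of `D`. -/
def parabolic (D : Finset V) : Subgroup (V ≃ₗ[ℝ] V) :=
  Subgroup.closure (reflectionsIn D)

/-- The image of an affine subspace under a linear automorphism. -/
def mapAff (w : V ≃ₗ[ℝ] V) (L : AffineSubspace ℝ V) : AffineSubspace ℝ V :=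
  L.map (w : V →ₗ[ℝ] V).toAffineMap

/-- `P̂_L`, the set of coroots which are constant equal to `1` on `L`. -/
noncomputable def PL (S : CorootSystem V) (L : AffineSubspace ℝ V) : Finset V :=
  S.Rhat.filter fun a => ∀ v ∈ L, ⟪a, v⟫ = 1

/-- `Ẑ_L`, the set of coroots vanishing identically on `L`. -/
noncomputable def ZL (S : CorootSystem V) (L : AffineSubspace ℝ V) : Finset V :=
  S.Rhat.filter fun a => ∀ v ∈ L, ⟪a, v⟫ = 0

/-- The codimension of an affine subspace of `V`. -/
noncomputable def codim (L : AffineSubspace ℝ V) : ℕ :=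
  Module.finrank ℝ V - Module.finrank ℝ L.direction

/-- `R̂_L`, the Levi subsystem of coroots which are constant on `L`. -/
noncomputable def RLevi (S : CorootSystem V) (L : AffineSubspace ℝ V) : Finset V :=
  S.Rhat.filter fun a => ∀ v ∈ L, ∀ w ∈ L, ⟪a, v⟫ = ⟪a, w⟫

/-- `R̂_{L,+}`, the positive part of the Levi subsystem of coroots constant on `L`. -/
noncomputable def RLeviPos (S : CorootSystem V) (L : AffineSubspace ℝ V) : Finset V :=
  RLevi S L ∩ S.pos

/-- `Δ̂(L)`, the set of simple coroots of `R̂_{L,+}`: the indecomposable elements of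
`R̂_{L,+}`. -/
noncomputable def DeltaL (S : CorootSystem V) (L : AffineSubspace ℝ V) : Finset V :=
  (RLeviPos S L).filter fun a => ¬ ∃ b ∈ RLeviPos S L, ∃ c ∈ RLeviPos S L, a = b + c

/-- The coroots of the maximal proper standard Levi subsystem `R'` obtained by
removing the simple coroot `a0`: the coroots lying in the span of the remaining
simple coroots. -/
noncomputable def RhatPrime (S : CorootSystem V) (a0 : V) : Finset V :=
  S.Rhat.filter fun b => b ∈ Submodule.span ℝ ((S.simples.erase a0 : Finset V) : Set V)

/-- `R̂'₊`, the positive coroots of the standard Levi subsystem `R'`. -/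
noncomputable def posPrime (S : CorootSystem V) (a0 : V) : Finset V :=
  S.pos ∩ RhatPrime S a0

/-- The Weyl group `W'` of the standard Levi subsystem `R'`. -/
def weylPrime (S : CorootSystem V) (a0 : V) : Subgroup (V ≃ₗ[ℝ] V) :=
  Subgroup.closure (reflectionsIn (RhatPrime S a0))

/-- `R̂₊ ∪ R̂'₋`, the set of coroots relevant for the `Ω`-pole space condition. -/
noncomputable def omegaCoroots (S : CorootSystem V) (a0 : V) : Finset V :=
  S.pos ∪ (posPrime S a0).image (fun a => -a)

/-- `L` is an `Ω`-pole space: `|P̂_L(Ω)| ≥ |Ẑ_L(Ω)| + codim L` and `L` is the intersection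
of the affine hyperplanes `{α̂ = 1}` for `α̂ ∈ P̂_L(Ω)`. -/
def IsOmegaPole (S : CorootSystem V) (a0 : V) (L : AffineSubspace ℝ V) : Prop :=
  (ZL S L ∩ omegaCoroots S a0).card + codim L ≤ (PL S L ∩ omegaCoroots S a0).card ∧
  (L : Set V) = ⋂ a ∈ (PL S L ∩ omegaCoroots S a0), {v : V | ⟪a, v⟫ = 1}

/-- `L` is a pole space if `w(L)` is an `Ω`-pole space for some `w ∈ W`. -/
def IsPoleSpace (S : CorootSystem V) (a0 : V) (L : AffineSubspace ℝ V) : Prop :=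
  ∃ w ∈ S.weyl, IsOmegaPole S a0 (mapAff w L)

/-- A pole space is regular if no coroot vanishes identically on it. -/
def IsRegular (S : CorootSystem V) (L : AffineSubspace ℝ V) : Prop :=
  ∀ a ∈ S.Rhat, ¬ (∀ v ∈ L, ⟪a, v⟫ = 0)

/-- `L` is residual if `|P̂_L| ≥ |Ẑ_L| + codim L`. -/
def IsResidual (S : CorootSystem V) (L : AffineSubspace ℝ V) : Prop :=
  (ZL S L).card + codim L ≤ (PL S L).card

/-- `L` is essentially standard if `R̂_L` is a standard Levi subsystem,
i.e. `Δ̂(L) ⊆ Δ̂`. -/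
def IsEssentiallyStandard (S : CorootSystem V) (L : AffineSubspace ℝ V) : Prop :=
  DeltaL S L ⊆ S.simples

/-- `L` is standard if it is essentially standard and every coroot of `R̂_{L,+}` takes a
nonnegative (constant) value on `L`. -/
def IsStandard (S : CorootSystem V) (L : AffineSubspace ℝ V) : Prop :=
  IsEssentiallyStandard S L ∧ ∀ a ∈ RLeviPos S L, ∀ v ∈ L, 0 ≤ ⟪a, v⟫

end CorootSystem

open CorootSystem

variable {V : Type*} [NormedAddCommGroup V] [InnerProductSpace ℝ V] [FiniteDimensional ℝ V]
section Aux
set_option linter.unusedSectionVars false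

lemma real_smul_cancel {V : Type*} [AddCommGroup V] [Module ℝ V] (x a : V) (c d : ℝ)
    (h : c + d = 0) : x - c • a - d • a = x := by
  rw [sub_sub, ← add_smul, h, zero_smul, sub_zero]

variable {V : Type*} [NormedAddCommGroup V] [InnerProductSpace ℝ V] [FiniteDimensional ℝ V]

/-- The reflection in a vector, as a linear map. -/
noncomputable def reflMap (a : V) : V →ₗ[ℝ] V where
  toFun v := v - (2 * ⟪a, v⟫ / ⟪a, a⟫) • a
  map_add' x y := by
    simp only [inner_add_right]
    rw [mul_add, add_div, add_smul]
    abel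
  map_smul' c x := by
    simp only [inner_smul_right, RingHom.id_apply, smul_sub, smul_smul]
    congr 1
    rw [mul_comm c]
    congr 1
    ring

lemma reflMap_apply (a v : V) : reflMap a v = v - (2 * ⟪a, v⟫ / ⟪a, a⟫) • a := rfl

lemma reflMap_involutive (a : V) (v : V) : reflMap a (reflMap a v) = v := by
  by_cases ha : a = 0
  · simp [reflMap, ha]
  · have haa : ⟪a, a⟫ ≠ 0 := inner_self_ne_zero.mpr ha
    simp only [reflMap_apply, inner_sub_right, inner_smul_right]
    apply real_smul_cancel
    field_simp
    ring

/-- The reflection in a vector, as a linear automorphism. -/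
noncomputable def srefl (a : V) : V ≃ₗ[ℝ] V :=
  LinearEquiv.ofLinear (reflMap a) (reflMap a)
    (by ext v; simp [reflMap_involutive])
    (by ext v; simp [reflMap_involutive])

lemma srefl_apply (a v : V) : srefl a v = v - (2 * ⟪a, v⟫ / ⟪a, a⟫) • a := rfl

lemma srefl_inv (a : V) : (srefl a)⁻¹ = srefl a := rfl

@[simp] lemma mulEquiv_apply (g h : V ≃ₗ[ℝ] V) (v : V) : (g * h) v = g (h v) := rfl

@[simp] lemma inv_apply_apply (g : V ≃ₗ[ℝ] V) (v : V) : g⁻¹ (g v) = v :=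
  g.symm_apply_apply v

@[simp] lemma apply_inv_apply (g : V ≃ₗ[ℝ] V) (v : V) : g (g⁻¹ v) = v :=
  g.apply_symm_apply v

lemma srefl_inner (a x y : V) : ⟪srefl a x, srefl a y⟫ = ⟪x, y⟫ := by
  by_cases ha : a = 0
  · simp [srefl_apply, ha]
  · have haa : ⟪a, a⟫ ≠ 0 := inner_self_ne_zero.mpr ha
    simp only [srefl_apply, inner_sub_left, inner_sub_right, real_inner_smul_left,
      real_inner_smul_right]
    rw [real_inner_comm x a, real_inner_comm y a]
    field_simp
    ring

lemma srefl_selfadj (a x y : V) : ⟪srefl a x, y⟫ = ⟪x, srefl a y⟫ := by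
  simp only [srefl_apply, inner_sub_left, inner_sub_right, real_inner_smul_left,
    real_inner_smul_right]
  rw [real_inner_comm x a]
  ring

variable (S : CorootSystem V)

lemma mem_RLevi {L : AffineSubspace ℝ V} {a : V} :
    a ∈ RLevi S L ↔ a ∈ S.Rhat ∧ ∀ v ∈ L, ∀ w ∈ L, ⟪a, v⟫ = ⟪a, w⟫ :=
  Finset.mem_filter

lemma RLevi_subset {L : AffineSubspace ℝ V} : RLevi S L ⊆ S.Rhat := Finset.filter_subset _ _

lemma RLeviPos_subset_RLevi {L : AffineSubspace ℝ V} : RLeviPos S L ⊆ RLevi S L :=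
  Finset.inter_subset_left

lemma RLeviPos_subset_pos {L : AffineSubspace ℝ V} : RLeviPos S L ⊆ S.pos :=
  Finset.inter_subset_right

lemma DeltaL_subset {L : AffineSubspace ℝ V} : DeltaL S L ⊆ RLeviPos S L :=
  Finset.filter_subset _ _

/-- The "good" subgroup: inner-product preserving automorphisms fixing the orthogonal
complement of the span of the coroots pointwise and permuting both the coroots and
a fixed finite set `RL`. -/
def good (RL : Finset V) : Subgroup (V ≃ₗ[ℝ] V) where
  carrier := {g | (∀ x y : V, ⟪g x, g y⟫ = ⟪x, y⟫) ∧
    (∀ v ∈ (Submodule.span ℝ (S.Rhat : Set V))ᗮ, g v = v) ∧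
    (∀ b ∈ S.Rhat, g b ∈ S.Rhat) ∧ (∀ b ∈ S.Rhat, g⁻¹ b ∈ S.Rhat) ∧
    (∀ b ∈ RL, g b ∈ RL) ∧ (∀ b ∈ RL, g⁻¹ b ∈ RL)}
  one_mem' := by
    have h1 : ∀ b : V, (1 : V ≃ₗ[ℝ] V) b = b := fun b => rfl
    have h2 : ∀ b : V, (1 : V ≃ₗ[ℝ] V)⁻¹ b = b := fun b => by rw [inv_one]; rfl
    exact ⟨fun x y => rfl, fun v _ => rfl, fun b hb => by rw [h1]; exact hb,
      fun b hb => by rw [h2]; exact hb, fun b hb => by rw [h1]; exact hb,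
      fun b hb => by rw [h2]; exact hb⟩
  mul_mem' := by
    rintro g h ⟨hg1, hg2, hg3, hg4, hg5, hg6⟩ ⟨hh1, hh2, hh3, hh4, hh5, hh6⟩
    have hinv : ∀ b : V, (g * h)⁻¹ b = h⁻¹ (g⁻¹ b) := by
      intro b; rw [mul_inv_rev]; rfl
    refine ⟨fun x y => by rw [mulEquiv_apply, mulEquiv_apply, hg1, hh1],
      fun v hv => by rw [mulEquiv_apply, hh2 v hv, hg2 v hv],
      fun b hb => hg3 _ (hh3 b hb),
      fun b hb => by rw [hinv]; exact hh4 _ (hg4 b hb),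
      fun b hb => hg5 _ (hh5 b hb),
      fun b hb => by rw [hinv]; exact hh6 _ (hg6 b hb)⟩
  inv_mem' := by
    rintro g ⟨hg1, hg2, hg3, hg4, hg5, hg6⟩
    refine ⟨fun x y => ?_, fun v hv => ?_, hg4, by simpa using hg3, hg6, by simpa using hg5⟩
    · rw [← hg1 (g⁻¹ x) (g⁻¹ y), apply_inv_apply, apply_inv_apply]
    · conv_lhs => rw [← hg2 v hv]
      rw [inv_apply_apply]

lemma good_finite (RL : Finset V) : ((good S RL : Subgroup (V ≃ₗ[ℝ] V)) : Set (V ≃ₗ[ℝ] V)).Finite := by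
  classical
  set T := Submodule.span ℝ ((S.Rhat : Finset V) : Set V) with hT
  have : Finite ({x // x ∈ S.Rhat} → {x // x ∈ S.Rhat}) := by infer_instance
  apply Set.Finite.of_finite_image (f := fun g : V ≃ₗ[ℝ] V =>
    fun b : {x // x ∈ S.Rhat} => if h : g b ∈ S.Rhat then (⟨g b, h⟩ : {x // x ∈ S.Rhat}) else b)
  · exact Set.toFinite _
  · rintro g ⟨hg1, hg2, hg3, -⟩ g' ⟨hg1', hg2', hg3', -⟩ heq
    have hagree : ∀ b ∈ S.Rhat, g b = g' b := by
      intro b hb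
      have h := congr_fun heq ⟨b, hb⟩
      simp only at h
      rw [dif_pos (hg3 b hb), dif_pos (hg3' b hb)] at h
      exact congrArg Subtype.val h
    have hle : T ⊔ Tᗮ ≤ LinearMap.eqLocus (g : V →ₗ[ℝ] V) (g' : V →ₗ[ℝ] V) := by
      apply sup_le
      · rw [Submodule.span_le]
        intro b hb
        exact hagree b (Finset.mem_coe.mp hb)
      · intro v hv
        show g v = g' v
        rw [hg2 v hv, hg2' v hv]
    rw [Submodule.sup_orthogonal_of_hasOrthogonalProjection] at hle
    ext v
    exact hle (Submodule.mem_top (x := v))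

lemma parabolic_le_good (L : AffineSubspace ℝ V) :
    parabolic (DeltaL S L) ≤ good S (RLevi S L) := by
  apply (Subgroup.closure_le _).mpr
  rintro g ⟨a, ha, hga⟩
  have hgs : g = srefl a := by
    apply LinearEquiv.toLinearMap_injective
    apply LinearMap.ext
    intro v
    exact hga v
  subst hgs
  have haR : a ∈ RLevi S L := RLeviPos_subset_RLevi S (DeltaL_subset S ha)
  have haRhat : a ∈ S.Rhat := RLevi_subset S haR
  have hmapsR : ∀ b ∈ S.Rhat, srefl a b ∈ S.Rhat := by
    intro b hb
    rw [srefl_apply]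
    exact S.refl_mem a haRhat b hb
  have hmapsL : ∀ b ∈ RLevi S L, srefl a b ∈ RLevi S L := by
    intro b hb
    rw [mem_RLevi] at hb ⊢
    refine ⟨hmapsR b hb.1, fun v hv w hw => ?_⟩
    rw [srefl_apply]
    simp only [inner_sub_left, real_inner_smul_left]
    rw [hb.2 v hv w hw, (mem_RLevi S).mp haR |>.2 v hv w hw]
  refine ⟨srefl_inner a, ?_, hmapsR, ?_, hmapsL, ?_⟩
  · intro v hv
    have hav : ⟪a, v⟫ = 0 :=
      (Submodule.mem_orthogonal _ v).mp hv a (Submodule.subset_span (Finset.mem_coe.mpr haRhat))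
    rw [srefl_apply, hav]
    simp
  · rw [srefl_inv]; exact hmapsR
  · rw [srefl_inv]; exact hmapsL

lemma parabolic_le_weyl (L : AffineSubspace ℝ V) : parabolic (DeltaL S L) ≤ S.weyl := by
  apply Subgroup.closure_mono
  rintro g ⟨a, ha, hga⟩
  exact ⟨a, RLevi_subset S (RLeviPos_subset_RLevi S (DeltaL_subset S ha)), hga⟩
lemma exists_dual : ∃ ξ : V, ∀ α ∈ S.simples, ⟪α, ξ⟫ = 1 := by
  classical
  set n := {x // x ∈ S.simples}
  let ψ : (n → ℝ) →ₗ[ℝ] V :=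
    { toFun := fun c => ∑ i : n, c i • (i : V)
      map_add' := by intro c d; simp [add_smul, Finset.sum_add_distrib]
      map_smul' := by intro r c; simp [smul_smul, Finset.smul_sum] }
  let φ : V →ₗ[ℝ] (n → ℝ) :=
    { toFun := fun v i => ⟪(i : V), v⟫
      map_add' := by intro x y; funext i; simp [inner_add_right]
      map_smul' := by intro r x; funext i; simp [inner_smul_right] }
  have hinj : Function.Injective (φ ∘ₗ ψ) := by
    rw [← LinearMap.ker_eq_bot, LinearMap.ker_eq_bot']
    intro c hc
    have hzero : ∀ i : n, ⟪(i : V), ψ c⟫ = 0 := by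
      intro i
      exact congr_fun hc i
    have hψ : ψ c = 0 := by
      have h2 : ⟪ψ c, ψ c⟫ = 0 := by
        show ⟪∑ i : n, c i • (i : V), ψ c⟫ = 0
        rw [sum_inner]
        apply Finset.sum_eq_zero
        intro i _
        rw [real_inner_smul_left, hzero i, mul_zero]
      exact inner_self_eq_zero.mp h2
    have := Fintype.linearIndependent_iff.mp S.simples_indep c hψ
    funext i
    exact this i
  obtain ⟨c, hc⟩ := LinearMap.surjective_of_injective hinj (fun _ => (1 : ℝ))
  refine ⟨ψ c, fun α hα => ?_⟩
  exact congr_fun hc ⟨α, hα⟩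

variable {S}

lemma height_exists {ξ : V} (hξ : ∀ α ∈ S.simples, ⟪α, ξ⟫ = 1) :
    ∀ b ∈ S.pos, ∃ k : ℕ, ⟪b, ξ⟫ = (k : ℝ) ∧ 1 ≤ k := by
  intro b hb
  obtain ⟨c, hc⟩ := S.pos_comb b hb
  refine ⟨∑ a ∈ S.simples, c a, ?_, ?_⟩
  · rw [hc, sum_inner, Nat.cast_sum]
    apply Finset.sum_congr rfl
    intro a ha
    rw [real_inner_smul_left, hξ a ha, mul_one]
  · by_contra hlt
    push_neg at hlt
    interval_cases h : (∑ a ∈ S.simples, c a)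
    · have hall : ∀ a ∈ S.simples, c a = 0 := by
        intro a ha
        exact (Finset.sum_eq_zero_iff.mp h) a ha
      have : b = 0 := by
        rw [hc]
        apply Finset.sum_eq_zero
        intro a ha
        rw [hall a ha]
        simp
      exact S.ne_zero b (S.pos_subset hb) this

lemma dominance_ext {ξ : V} (hξ : ∀ α ∈ S.simples, ⟪α, ξ⟫ = 1) (L' : AffineSubspace ℝ V)
    (θ : V) (hθ : ∀ α ∈ DeltaL S L', 0 ≤ ⟪α, θ⟫) :
    ∀ a ∈ RLeviPos S L', 0 ≤ ⟪a, θ⟫ := by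
  classical
  suffices H : ∀ N : ℕ, ∀ a ∈ RLeviPos S L', ∀ k : ℕ, ⟪a, ξ⟫ = (k : ℝ) → k ≤ N → 0 ≤ ⟪a, θ⟫ by
    intro a ha
    obtain ⟨k, hk, _⟩ := height_exists hξ a (RLeviPos_subset_pos S ha)
    exact H k a ha k hk le_rfl
  intro N
  induction N with
  | zero =>
    intro a ha k hk hkN
    obtain ⟨k', hk', hk1⟩ := height_exists hξ a (RLeviPos_subset_pos S ha)
    have : (k : ℝ) = (k' : ℝ) := by rw [← hk, hk']
    have hkk : k = k' := Nat.cast_injective this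
    omega
  | succ N ih =>
    intro a ha k hk hkN
    by_cases hD : a ∈ DeltaL S L'
    · exact hθ a hD
    · have hdec : ∃ b ∈ RLeviPos S L', ∃ c ∈ RLeviPos S L', a = b + c := by
        by_contra hcon
        exact hD (Finset.mem_filter.mpr ⟨ha, hcon⟩)
      obtain ⟨b, hb, c, hc, habc⟩ := hdec
      obtain ⟨kb, hkb, hkb1⟩ := height_exists hξ b (RLeviPos_subset_pos S hb)
      obtain ⟨kc, hkc, hkc1⟩ := height_exists hξ c (RLeviPos_subset_pos S hc)
      have hsum : (kb : ℝ) + (kc : ℝ) = (k : ℝ) := by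
        rw [← hkb, ← hkc, ← hk, habc, inner_add_left]
      have hks : kb + kc = k := by
        have := hsum
        exact_mod_cast this
      have h1 : 0 ≤ ⟪b, θ⟫ := ih b hb kb hkb (by omega)
      have h2 : 0 ≤ ⟪c, θ⟫ := ih c hc kc hkc (by omega)
      rw [habc, inner_add_left]
      linarith

lemma exists_generic (E : Submodule ℝ V) (B : Finset V) (hB : ∀ b ∈ B, b ∉ E) :
    ∃ η ∈ Eᗮ, ∀ b ∈ B, ⟪b, η⟫ ≠ 0 := by
  classical
  induction B using Finset.induction_on with
  | empty => exact ⟨0, Submodule.zero_mem _, fun b hb => absurd hb (Finset.notMem_empty b)⟩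
  | @insert b B' hbB ih =>
    obtain ⟨η, hηE, hη⟩ := ih (fun x hx => hB x (Finset.mem_insert_of_mem hx))
    have hbE : b ∉ E := hB b (Finset.mem_insert_self b B')
    have hex : ∃ ηb ∈ Eᗮ, ⟪b, ηb⟫ ≠ 0 := by
      by_contra hcon
      push_neg at hcon
      apply hbE
      rw [← Submodule.orthogonal_orthogonal E]
      rw [Submodule.mem_orthogonal]
      intro u hu
      rw [real_inner_comm]
      exact hcon u hu
    obtain ⟨ηb, hηbE, hηb⟩ := hex
    set bad : Finset ℝ := (insert b B').image (fun b' => -⟪b', η⟫ / ⟪b', ηb⟫) with hbad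
    obtain ⟨t, ht⟩ := Infinite.exists_notMem_finset bad
    refine ⟨η + t • ηb, Submodule.add_mem _ hηE (Submodule.smul_mem _ t hηbE), ?_⟩
    intro b'' hb''
    rw [inner_add_right, real_inner_smul_right]
    by_cases h0 : ⟪b'', ηb⟫ = 0
    · rw [h0, mul_zero, add_zero]
      rcases Finset.mem_insert.mp hb'' with h | h
      · subst h; exact absurd h0 hηb
      · exact hη b'' h
    · intro hzero
      apply ht
      rw [hbad, Finset.mem_image]
      refine ⟨b'', hb'', ?_⟩
      field_simp
      linarith
lemma exists_small (B : Finset V) (η v0 : V) (hη : ∀ b ∈ B, ⟪b, η⟫ ≠ 0) :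
    ∃ s : ℝ, 0 < s ∧ ∀ b ∈ B, s * |⟪b, v0⟫| < |⟪b, η⟫| := by
  classical
  rcases B.eq_empty_or_nonempty with h | h
  · exact ⟨1, one_pos, fun b hb => absurd hb (by rw [h]; exact Finset.notMem_empty b)⟩
  · refine ⟨B.inf' h (fun b => |⟪b, η⟫| / (1 + |⟪b, v0⟫|)), ?_, ?_⟩
    · rw [Finset.lt_inf'_iff]
      intro b hb
      exact div_pos (abs_pos.mpr (hη b hb)) (by positivity)
    · intro b hb
      have h1 : B.inf' h (fun b => |⟪b, η⟫| / (1 + |⟪b, v0⟫|)) ≤ |⟪b, η⟫| / (1 + |⟪b, v0⟫|) :=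
        Finset.inf'_le _ hb
      have h2 : 0 < |⟪b, η⟫| := abs_pos.mpr (hη b hb)
      have h3 : (0:ℝ) < 1 + |⟪b, v0⟫| := by positivity
      have h4 : |⟪b, η⟫| / (1 + |⟪b, v0⟫|) * |⟪b, v0⟫| < |⟪b, η⟫| := by
        rw [div_mul_eq_mul_div, div_lt_iff₀ h3]
        nlinarith [abs_nonneg (⟪b, v0⟫)]
      calc B.inf' h _ * |⟪b, v0⟫| ≤ |⟪b, η⟫| / (1 + |⟪b, v0⟫|) * |⟪b, v0⟫| :=
            mul_le_mul_of_nonneg_right h1 (abs_nonneg _)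
        _ < |⟪b, η⟫| := h4

lemma mem_mapAff {w : V ≃ₗ[ℝ] V} {N : AffineSubspace ℝ V} {x : V} :
    x ∈ mapAff w N ↔ ∃ u ∈ N, w u = x := by
  simp [mapAff, AffineSubspace.mem_map]

lemma mapAff_mapAff (g h : V ≃ₗ[ℝ] V) (N : AffineSubspace ℝ V) :
    mapAff g (mapAff h N) = mapAff (g * h) N := by
  ext x
  simp only [mem_mapAff]
  constructor
  · rintro ⟨u, ⟨u', hu', rfl⟩, rfl⟩
    exact ⟨u', hu', rfl⟩
  · rintro ⟨u, hu, rfl⟩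
    exact ⟨h u, ⟨u, hu, rfl⟩, rfl⟩

lemma mapAff_one (N : AffineSubspace ℝ V) : mapAff (1 : V ≃ₗ[ℝ] V) N = N := by
  ext x
  simp only [mem_mapAff]
  constructor
  · rintro ⟨u, hu, rfl⟩; exact hu
  · intro hx; exact ⟨x, hx, rfl⟩

lemma pole_nonempty {a0 : V} {M : AffineSubspace ℝ V} (hM : IsPoleSpace S a0 M) :
    ∃ v, v ∈ M := by
  obtain ⟨w, hw, hΩ⟩ := hM
  have hne : ((mapAff w M : AffineSubspace ℝ V) : Set V).Nonempty := by
    by_contra hcon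
    rw [Set.not_nonempty_iff_eq_empty] at hcon
    set N := mapAff w M with hN
    have hnomem : ∀ v : V, v ∉ N := by
      intro v hv
      have : v ∈ (N : Set V) := hv
      rw [hcon] at this
      exact this
    have hP : PL S N = S.Rhat := by
      apply Finset.filter_true_of_mem
      intro a _ v hv
      exact absurd hv (hnomem v)
    have hZ : ZL S N = S.Rhat := by
      apply Finset.filter_true_of_mem
      intro a _ v hv
      exact absurd hv (hnomem v)
    have hbot : N = ⊥ := by
      exact (AffineSubspace.coe_eq_bot_iff N).mp hcon
    have hdir : Module.finrank ℝ N.direction = 0 := by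
      rw [hbot, AffineSubspace.direction_bot, finrank_bot]
    have hcodim : codim N = Module.finrank ℝ V := by
      rw [codim, hdir, Nat.sub_zero]
    have h1 := hΩ.1
    rw [hP, hZ, hcodim] at h1
    have hrank : Module.finrank ℝ V = 0 := by omega
    have hsub : Subsingleton V := by
      exact Module.finrank_zero_iff.mp hrank
    have hRhat : S.Rhat = ∅ := by
      rcases Finset.eq_empty_or_nonempty S.Rhat with h | ⟨a, ha⟩
      · exact h
      · exact absurd (Subsingleton.elim a 0) (S.ne_zero a ha)
    have h2 := hΩ.2
    rw [hP, hRhat] at h2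
    simp only [Finset.empty_inter, Finset.notMem_empty, Set.iInter_of_empty,
      Set.iInter_univ] at h2
    rw [hcon] at h2
    exact Set.empty_ne_univ h2
  obtain ⟨x, hx⟩ := hne
  obtain ⟨u, hu, -⟩ := mem_mapAff.mp hx
  exact ⟨u, hu⟩
end Aux
/-- if `L` is an essentially standard pole space and `M ⊇ L` is a pole space
containing it, then there exist `w_M` in the parabolic subgroup `W(Δ̂(L))` generated by the
reflections in the simple coroots `Δ̂(L)` of `R̂_L`, and a standard pole space `M₀`, with
`M = w_M(M₀)`. -/
theorem statement1 (S : CorootSystem V) (a0 : V) (ha0 : a0 ∈ S.simples)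
    (L M : AffineSubspace ℝ V)
    (hL : IsPoleSpace S a0 L) (hLes : IsEssentiallyStandard S L)
    (hM : IsPoleSpace S a0 M) (hLM : L ≤ M) :
    ∃ wM ∈ parabolic (DeltaL S L), ∃ M0 : AffineSubspace ℝ V,
      IsPoleSpace S a0 M0 ∧ IsStandard S M0 ∧ M = mapAff wM M0 := by
  classical
  obtain ⟨ξ, hξ⟩ := exists_dual S
  obtain ⟨v0, hv0⟩ := pole_nonempty hM
  set E : Submodule ℝ V := Submodule.span ℝ ((RLevi S M : Finset V) : Set V) with hEdef
  have hEconst : ∀ x ∈ E, ∀ v ∈ M, ∀ v' ∈ M, ⟪x, v⟫ = ⟪x, v'⟫ := by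
    let C : Submodule ℝ V :=
      { carrier := {x | ∀ v ∈ M, ∀ v' ∈ M, ⟪x, v⟫ = ⟪x, v'⟫}
        add_mem' := fun {a b} ha hb v hv v' hv' => by
          simp only [inner_add_left]
          rw [ha v hv v' hv', hb v hv v' hv']
        zero_mem' := fun v hv v' hv' => by simp
        smul_mem' := fun c x hx v hv v' hv' => by
          simp only [real_inner_smul_left]
          rw [hx v hv v' hv'] }
    have hle : E ≤ C := Submodule.span_le.mpr
      (fun x hx => ((mem_RLevi S).mp (Finset.mem_coe.mp hx)).2)
    exact fun x hx => hle hx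
  set B : Finset V := (RLevi S L).filter (fun b => b ∉ E) with hBdef
  have hBspec : ∀ b ∈ B, b ∉ E := fun b hb => (Finset.mem_filter.mp hb).2
  obtain ⟨η, hηE, hηB⟩ := exists_generic E B hBspec
  obtain ⟨s, hs, hsB⟩ := exists_small B η v0 hηB
  set ζ : V := η + s • v0 with hζdef
  have hζsplit : ∀ b : V, ⟪b, ζ⟫ = ⟪b, η⟫ + s * ⟪b, v0⟫ := by
    intro b
    rw [hζdef, inner_add_right, real_inner_smul_right]
  have hfin : ((parabolic (DeltaL S L) : Subgroup (V ≃ₗ[ℝ] V)) : Set (V ≃ₗ[ℝ] V)).Finite :=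
    Set.Finite.subset (good_finite S (RLevi S L)) (parabolic_le_good S L)
  obtain ⟨w, hw, hmax⟩ := Set.exists_max_image _ (fun g : V ≃ₗ[ℝ] V => ⟪ξ, g⁻¹ ζ⟫) hfin
    ⟨1, Subgroup.one_mem _⟩
  obtain ⟨hw1, hw2, hw3, hw4, hw5, hw6⟩ := parabolic_le_good S L hw
  have hwinner : ∀ x y : V, ⟪x, w⁻¹ y⟫ = ⟪w x, y⟫ := by
    intro x y
    conv_rhs => rw [← apply_inv_apply w y]
    exact (hw1 x (w⁻¹ y)).symm
  -- dominance on the simple coroots of the Levi of L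
  have hsreflmem : ∀ α ∈ DeltaL S L, srefl α ∈ parabolic (DeltaL S L) := by
    intro α hα
    exact Subgroup.subset_closure ⟨α, hα, fun v => rfl⟩
  have hdomsimple : ∀ α ∈ DeltaL S L, 0 ≤ ⟪α, w⁻¹ ζ⟫ := by
    intro α hα
    by_contra hneg
    push_neg at hneg
    have hαR : α ∈ S.Rhat := RLevi_subset S (RLeviPos_subset_RLevi S (DeltaL_subset S hα))
    have hαα : 0 < ⟪α, α⟫ :=
      lt_of_le_of_ne real_inner_self_nonneg
        (Ne.symm (inner_self_ne_zero.mpr (S.ne_zero α hαR)))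
    have hmem : w * srefl α ∈ (parabolic (DeltaL S L) : Set (V ≃ₗ[ℝ] V)) :=
      mul_mem hw (hsreflmem α hα)
    have hle := hmax _ hmem
    have hcomp : (w * srefl α)⁻¹ ζ = srefl α (w⁻¹ ζ) := by
      rw [mul_inv_rev, srefl_inv, mulEquiv_apply]
    rw [hcomp, ← srefl_selfadj, srefl_apply, inner_sub_left, real_inner_smul_left,
      hξ α (hLes hα)] at hle
    have hbad : 2 * 1 / ⟪α, α⟫ * ⟪α, w⁻¹ ζ⟫ < 0 :=
      mul_neg_of_pos_of_neg (by positivity) hneg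
    linarith
  have hdomL : ∀ a ∈ RLeviPos S L, 0 ≤ ⟪a, w⁻¹ ζ⟫ := dominance_ext hξ L _ hdomsimple
  -- the candidate standard pole space
  set M0 : AffineSubspace ℝ V := mapAff w⁻¹ M with hM0def
  have hwmemM0 : ∀ v : V, v ∈ M0 ↔ w v ∈ M := by
    intro v
    rw [hM0def, mem_mapAff]
    constructor
    · rintro ⟨u, hu, rfl⟩
      rw [apply_inv_apply]
      exact hu
    · intro h
      exact ⟨w v, h, inv_apply_apply w v⟩
  have hRLeviM0 : ∀ a : V, a ∈ RLevi S M0 ↔ w a ∈ RLevi S M := by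
    intro a
    rw [mem_RLevi, mem_RLevi]
    constructor
    · rintro ⟨haR, hconst⟩
      refine ⟨hw3 a haR, fun v hv v' hv' => ?_⟩
      have h1 : w⁻¹ v ∈ M0 := (hwmemM0 _).mpr (by rw [apply_inv_apply]; exact hv)
      have h2 : w⁻¹ v' ∈ M0 := (hwmemM0 _).mpr (by rw [apply_inv_apply]; exact hv')
      have h3 := hconst _ h1 _ h2
      rwa [hwinner, hwinner] at h3
    · rintro ⟨haR, hconst⟩
      have haR' : a ∈ S.Rhat := by
        have h := hw4 (w a) haR
        rwa [inv_apply_apply] at h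
      refine ⟨haR', fun v hv v' hv' => ?_⟩
      rw [hwmemM0] at hv hv'
      have h3 := hconst _ hv _ hv'
      rwa [hw1, hw1] at h3
  have hMsubL : ∀ b, b ∈ RLevi S M → b ∈ RLevi S L := by
    intro b hb
    rw [mem_RLevi] at hb ⊢
    exact ⟨hb.1, fun v hv v' hv' => hb.2 v (hLM hv) v' (hLM hv')⟩
  have haLofM0 : ∀ a, a ∈ RLevi S M0 → a ∈ RLevi S L := by
    intro a ha
    have h1 : w a ∈ RLevi S L := hMsubL _ ((hRLeviM0 a).mp ha)
    have h2 := hw6 _ h1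
    rwa [inv_apply_apply] at h2
  have hη0 : ∀ a, a ∈ RLevi S M0 → ⟪w a, η⟫ = 0 := by
    intro a ha
    exact (Submodule.mem_orthogonal E η).mp hηE (w a)
      (Submodule.subset_span (Finset.mem_coe.mpr ((hRLeviM0 a).mp ha)))
  have hζM0 : ∀ a, a ∈ RLevi S M0 → ⟪a, w⁻¹ ζ⟫ = s * ⟪w a, v0⟫ := by
    intro a ha
    rw [hwinner, hζsplit, hη0 a ha, zero_add]
  have hspanM : ∀ x, x ∈ S.Rhat → x ∈ E → x ∈ RLevi S M := by
    intro x hx hxE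
    exact (mem_RLevi S).mpr ⟨hx, fun v hv v' hv' => hEconst x hxE v hv v' hv'⟩
  have hθdom : ∀ a ∈ RLeviPos S L, 0 ≤ ⟪w a, η⟫ := by
    intro a ha
    have hwa : w a ∈ RLevi S L := hw5 _ (RLeviPos_subset_RLevi S ha)
    by_cases hEm : w a ∈ E
    · rw [(Submodule.mem_orthogonal E η).mp hηE (w a) hEm]
    · have hwaB : w a ∈ B := Finset.mem_filter.mpr ⟨hwa, hEm⟩
      have hlt := hsB _ hwaB
      have h0 := hdomL a ha
      rw [hwinner, hζsplit] at h0
      have haux : s * ⟪w a, v0⟫ ≤ s * |⟪w a, v0⟫| :=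
        mul_le_mul_of_nonneg_left (le_abs_self _) hs.le
      rcases abs_cases (⟪w a, η⟫ : ℝ) with ⟨he, hp⟩ | ⟨he, hn⟩
      · linarith
      · rw [he] at hlt
        linarith
  have hθsep : ∀ a, a ∈ RLevi S L → ⟪w a, η⟫ = 0 → a ∈ RLevi S M0 := by
    intro a haL h0
    have hwa : w a ∈ RLevi S L := hw5 _ haL
    by_cases hEm : w a ∈ E
    · exact (hRLeviM0 a).mpr (hspanM _ (RLevi_subset S hwa) hEm)
    · exact absurd h0 (hηB _ (Finset.mem_filter.mpr ⟨hwa, hEm⟩))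
  -- standardness, part 2
  have hstd2 : ∀ a ∈ RLeviPos S M0, ∀ v ∈ M0, 0 ≤ ⟪a, v⟫ := by
    intro a ha v hv
    have haM0 : a ∈ RLevi S M0 := RLeviPos_subset_RLevi S ha
    have haL : a ∈ RLeviPos S L :=
      Finset.mem_inter.mpr ⟨haLofM0 a haM0, RLeviPos_subset_pos S ha⟩
    have h0 := hdomL a haL
    rw [hζM0 a haM0] at h0
    have hval : 0 ≤ ⟪w a, v0⟫ := by nlinarith
    have hv0' : w⁻¹ v0 ∈ M0 := (hwmemM0 _).mpr (by rw [apply_inv_apply]; exact hv0)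
    have hconst := ((mem_RLevi S).mp haM0).2 v hv (w⁻¹ v0) hv0'
    rw [hconst, hwinner]
    exact hval
  -- standardness, part 1 (essentially standard)
  have hes : DeltaL S M0 ⊆ S.simples := by
    intro a ha
    have haP : a ∈ RLeviPos S M0 := DeltaL_subset S ha
    have hind := (Finset.mem_filter.mp ha).2
    have haM0 : a ∈ RLevi S M0 := RLeviPos_subset_RLevi S haP
    have haL : a ∈ RLeviPos S L :=
      Finset.mem_inter.mpr ⟨haLofM0 a haM0, RLeviPos_subset_pos S haP⟩
    by_cases hD : a ∈ DeltaL S L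
    · exact hLes hD
    · exfalso
      have hdec : ∃ b ∈ RLeviPos S L, ∃ c ∈ RLeviPos S L, a = b + c := by
        by_contra hcon
        exact hD (Finset.mem_filter.mpr ⟨haL, hcon⟩)
      obtain ⟨b, hb, c, hc, habc⟩ := hdec
      have hb0 := hθdom b hb
      have hc0 := hθdom c hc
      have hsum : ⟪w b, η⟫ + ⟪w c, η⟫ = 0 := by
        have h0 : ⟪w a, η⟫ = 0 := hη0 a haM0
        rw [habc, map_add, inner_add_left] at h0
        exact h0
      have hbM0 : b ∈ RLevi S M0 := hθsep b (RLeviPos_subset_RLevi S hb) (by linarith)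
      have hcM0 : c ∈ RLevi S M0 := hθsep c (RLeviPos_subset_RLevi S hc) (by linarith)
      exact hind ⟨b, Finset.mem_inter.mpr ⟨hbM0, RLeviPos_subset_pos S hb⟩,
        c, Finset.mem_inter.mpr ⟨hcM0, RLeviPos_subset_pos S hc⟩, habc⟩
  -- M0 is a pole space
  have hwW : w ∈ S.weyl := parabolic_le_weyl S L hw
  have hpole : IsPoleSpace S a0 M0 := by
    obtain ⟨w', hw', hΩ⟩ := hM
    refine ⟨w' * w, mul_mem hw' hwW, ?_⟩
    have heq : mapAff (w' * w) M0 = mapAff w' M := by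
      rw [hM0def, mapAff_mapAff, mul_inv_cancel_right]
    rw [heq]
    exact hΩ
  refine ⟨w, hw, M0, hpole, ⟨hes, hstd2⟩, ?_⟩
  rw [hM0def, mapAff_mapAff, mul_inv_cancel, mapAff_one]
end

section
/- Let L be a regular pole space and let (L_0, w) be a standard pair representing L, i.e. L_0 is a standard pole space and L = w(L_0). Write w = u·d with u ∈ W' and d the minimal-length element of the coset W'd (equivalently, d⁻¹(R̂'_+) ⊆ R̂_+). Then L is good, i.e. P̂_L ⊆ R̂_+ ∪ R̂', if and only if d(P̂_{L_0}) ⊆ R̂_+. -/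
open scoped RealInnerProductSpace Classical

open CorootSystem

variable {V : Type*} [NormedAddCommGroup V] [InnerProductSpace ℝ V] [FiniteDimensional ℝ V]


set_option linter.unusedSectionVars false
set_option maxHeartbeats 1000000

lemma aux_refl {a : V} (ha : a ≠ 0) (g : V ≃ₗ[ℝ] V)
    (hg : ∀ v, g v = v - (2 * ⟪a, v⟫ / ⟪a, a⟫) • a) :
    (∀ x y : V, ⟪g x, g y⟫ = ⟪x, y⟫) ∧ (∀ v, g (g v) = v) := by
  have haa : ⟪a, a⟫ ≠ 0 := fun h => ha (inner_self_eq_zero.mp h)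
  have h1 : ∀ x y : V, ⟪g x, g y⟫ = ⟪x, y⟫ := by
    intro x y
    rw [hg x, hg y, inner_sub_left, inner_sub_right, inner_sub_right, real_inner_smul_left,
      real_inner_smul_left, real_inner_smul_right, real_inner_smul_right]
    field_simp
    rw [real_inner_comm x a]
    ring
  have h2 : ∀ v, ⟪a, g v⟫ = -⟪a, v⟫ := by
    intro v
    rw [hg v, inner_sub_right, real_inner_smul_right]
    field_simp
    ring
  refine ⟨h1, fun v => ?_⟩
  rw [hg (g v), h2 v, hg v, sub_sub, ← add_smul]
  have : 2 * ⟪a, v⟫ / ⟪a, a⟫ + 2 * -⟪a, v⟫ / ⟪a, a⟫ = 0 := by ring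
  rw [this, zero_smul, sub_zero]

lemma aux_closure_props (D : Finset V) (hD : ∀ a ∈ D, a ≠ 0)
    (hstab : ∀ a ∈ D, ∀ b ∈ D, b - (2 * ⟪a, b⟫ / ⟪a, a⟫) • a ∈ D)
    {g : V ≃ₗ[ℝ] V} (hg : g ∈ Subgroup.closure (reflectionsIn D)) :
    (∀ x y : V, ⟪g x, g y⟫ = ⟪x, y⟫) ∧ (∀ b ∈ D, g b ∈ D) ∧ (∀ b ∈ D, g⁻¹ b ∈ D) := by
  induction hg using Subgroup.closure_induction with
  | mem x hx =>
    obtain ⟨a, haD, hx⟩ := hx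
    obtain ⟨h1, h2⟩ := aux_refl (hD a haD) x hx
    have hxinv : ∀ v, x⁻¹ v = x v := by
      intro v
      conv_lhs => rw [← h2 v]
      exact x.symm_apply_apply (x v)
    refine ⟨h1, fun b hb => ?_, fun b hb => ?_⟩
    · rw [hx b]; exact hstab a haD b hb
    · rw [hxinv b, hx b]; exact hstab a haD b hb
  | one => exact ⟨fun x y => rfl, fun b hb => hb, fun b hb => hb⟩
  | mul x y hx hy ihx ihy =>
    refine ⟨fun v w => ?_, fun b hb => ?_, fun b hb => ?_⟩
    · show ⟪x (y v), x (y w)⟫ = ⟪v, w⟫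
      rw [ihx.1, ihy.1]
    · exact ihx.2.1 _ (ihy.2.1 b hb)
    · show (y⁻¹ * x⁻¹) b ∈ D
      exact ihy.2.2 _ (ihx.2.2 b hb)
  | inv x hx ih =>
    refine ⟨fun v w => ?_, ih.2.2, by simpa using ih.2.1⟩
    have h := ih.1 (x⁻¹ v) (x⁻¹ w)
    rw [show x (x⁻¹ v) = v from x.apply_symm_apply v,
      show x (x⁻¹ w) = w from x.apply_symm_apply w] at h
    exact h.symm

lemma aux_closure_coset (D : Finset V) (p : Submodule ℝ V) (hDp : ∀ a ∈ D, a ∈ p)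
    {g : V ≃ₗ[ℝ] V} (hg : g ∈ Subgroup.closure (reflectionsIn D)) :
    ∀ v : V, g v - v ∈ p := by
  induction hg using Subgroup.closure_induction with
  | mem x hx =>
    obtain ⟨a, haD, hx⟩ := hx
    intro v
    rw [hx v, sub_sub_cancel_left]
    exact p.neg_mem (p.smul_mem _ (hDp a haD))
  | one => intro v; simpa using p.zero_mem
  | mul x y hx hy ihx ihy =>
    intro v
    have h : (x * y) v - v = (x (y v) - y v) + (y v - v) := by
      show x (y v) - v = _; abel
    rw [h]
    exact p.add_mem (ihx _) (ihy _)
  | inv x hx ih =>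
    intro v
    have h : x⁻¹ v - v = -(x (x⁻¹ v) - x⁻¹ v) := by
      rw [show x (x⁻¹ v) = v from x.apply_symm_apply v]; abel
    rw [h]
    exact p.neg_mem (ih _)

/-- let `L` be a regular pole space and `(L₀, w)` a standard pair representing
`L`, i.e. `L₀` is a standard pole space and `L = w(L₀)`.  Write `w = u·d` with `u ∈ W'` and
`d` minimal in the coset `W'd` (equivalently `d⁻¹(R̂'₊) ⊆ R̂₊`).  Then `L` is good, i.e.
`P̂_L ⊆ R̂₊ ∪ R̂'`, if and only if `d(P̂_{L₀}) ⊆ R̂₊`. -/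
theorem statement2 (S : CorootSystem V) (a0 : V) (ha0 : a0 ∈ S.simples)
    (L L0 : AffineSubspace ℝ V)
    (hL : IsPoleSpace S a0 L) (hreg : IsRegular S L)
    (hL0 : IsPoleSpace S a0 L0) (hL0std : IsStandard S L0)
    (u d : V ≃ₗ[ℝ] V) (hu : u ∈ weylPrime S a0) (hd : d ∈ S.weyl)
    (hrepr : L = mapAff (u * d) L0)
    (hdmin : ∀ a ∈ posPrime S a0, d.symm a ∈ S.pos) :
    (∀ a ∈ PL S L, a ∈ S.pos ∪ RhatPrime S a0) ↔ (∀ a ∈ PL S L0, d a ∈ S.pos) := by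
  classical
  set p : Submodule ℝ V := Submodule.span ℝ ((S.simples.erase a0 : Finset V) : Set V) with hp
  have ha0p : a0 ∉ p := by
    intro hmem
    have hni := S.simples_indep.notMem_span_image
      (s := {x : {x // x ∈ S.simples} | (x : V) ≠ a0}) (x := ⟨a0, ha0⟩) (by simp)
    apply hni
    refine Submodule.span_mono ?_ hmem
    intro x hx
    simp only [Finset.coe_erase, Set.mem_diff, Finset.mem_coe, Set.mem_singleton_iff] at hx
    exact ⟨⟨x, hx.1⟩, by simp [hx.2], rfl⟩
  set z : V := a0 - (p.orthogonalProjectionOnto a0 : V) with hzdef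
  have hzorth : ∀ x ∈ p, ⟪z, x⟫ = 0 := by
    intro x hx
    rw [real_inner_comm]
    exact (Submodule.mem_orthogonal p z).mp
      (Submodule.sub_starProjection_mem_orthogonal (K := p) a0) x hx
  have hzne : z ≠ 0 := by
    intro h
    apply ha0p
    rw [hzdef, sub_eq_zero] at h
    rw [h]
    exact (p.orthogonalProjectionOnto a0).2
  have hza0 : 0 < ⟪z, a0⟫ := by
    have h : ⟪z, a0⟫ = ⟪z, z⟫ + ⟪z, (p.orthogonalProjectionOnto a0 : V)⟫ := by
      rw [← inner_add_right]
      congr 1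
      rw [hzdef]; abel
    rw [h, hzorth _ (p.orthogonalProjectionOnto a0).2, add_zero]
    exact lt_of_le_of_ne real_inner_self_nonneg
      (fun hc => hzne (inner_self_eq_zero.mp hc.symm))
  have hsimp_p : ∀ a ∈ S.simples, a ≠ a0 → a ∈ p := fun a ha hne =>
    Submodule.subset_span (by simp [Finset.mem_erase, hne, ha])
  have hposz : ∀ b ∈ S.pos, 0 ≤ ⟪z, b⟫ ∧ (⟪z, b⟫ = 0 → b ∈ p) := by
    intro b hb
    obtain ⟨c, hc⟩ := S.pos_comb b hb
    have hsum : ⟪z, b⟫ = (c a0 : ℝ) * ⟪z, a0⟫ := by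
      rw [hc, inner_sum, Finset.sum_eq_single a0]
      · rw [real_inner_smul_right]
      · intro a ha hne
        rw [real_inner_smul_right, hzorth a (hsimp_p a ha hne), mul_zero]
      · intro h; exact absurd ha0 h
    constructor
    · rw [hsum]
      exact mul_nonneg (Nat.cast_nonneg _) (le_of_lt hza0)
    · intro h0
      rw [hsum] at h0
      have hc0 : (c a0 : ℝ) = 0 := by
        rcases mul_eq_zero.mp h0 with h | h
        · exact h
        · exact absurd h (ne_of_gt hza0)
      rw [hc, ← Finset.sum_erase_add _ _ ha0, hc0, zero_smul, add_zero]
      exact Submodule.sum_mem _ (fun a ha =>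
        Submodule.smul_mem _ _ (Submodule.subset_span (Finset.mem_coe.mpr ha)))
  have hRhatP : ∀ x, x ∈ RhatPrime S a0 ↔ x ∈ S.Rhat ∧ x ∈ p := by
    intro x
    rw [RhatPrime, Finset.mem_filter, hp]
  have hcases : ∀ b ∈ S.Rhat, b ∈ S.pos ∨ -b ∈ S.pos := by
    intro b hb
    rw [S.union_eq, Finset.mem_union] at hb
    rcases hb with h | h
    · exact Or.inl h
    · obtain ⟨c, hcmem, hcb⟩ := Finset.mem_image.mp h
      right; rw [← hcb, neg_neg]; exact hcmem
  have hnegR : ∀ b ∈ S.Rhat, -b ∈ S.Rhat := by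
    intro b hb
    rcases hcases b hb with h | h
    · rw [S.union_eq, Finset.mem_union]
      exact Or.inr (Finset.mem_image_of_mem _ h)
    · exact S.pos_subset h
  have key : ∀ x ∈ S.Rhat, (x ∈ S.pos ∪ RhatPrime S a0 ↔ 0 ≤ ⟪z, x⟫) := by
    intro x hx
    constructor
    · intro h
      rcases Finset.mem_union.mp h with h | h
      · exact (hposz x h).1
      · rw [hzorth x ((hRhatP x).mp h).2]
    · intro h
      rcases hcases x hx with hpos | hneg
      · exact Finset.mem_union_left _ hpos
      · have h1 : 0 ≤ ⟪z, -x⟫ := (hposz _ hneg).1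
        rw [inner_neg_right] at h1
        have h0 : ⟪z, x⟫ = 0 := le_antisymm (by linarith) h
        have hnp : -x ∈ p := (hposz _ hneg).2 (by rw [inner_neg_right, h0, neg_zero])
        have hxp : x ∈ p := by simpa using p.neg_mem hnp
        exact Finset.mem_union_right _ ((hRhatP x).mpr ⟨hx, hxp⟩)
  have hWfacts : ∀ {g : V ≃ₗ[ℝ] V}, g ∈ S.weyl →
      (∀ x y : V, ⟪g x, g y⟫ = ⟪x, y⟫) ∧ (∀ b ∈ S.Rhat, g b ∈ S.Rhat) ∧
        (∀ b ∈ S.Rhat, g⁻¹ b ∈ S.Rhat) :=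
    fun hg => aux_closure_props S.Rhat S.ne_zero S.refl_mem hg
  have hWP_le : weylPrime S a0 ≤ S.weyl := by
    apply Subgroup.closure_mono
    rintro g ⟨a, haP, hga⟩
    exact ⟨a, (Finset.mem_filter.mp haP).1, hga⟩
  have hucoset : ∀ v : V, ⟪z, u v⟫ = ⟪z, v⟫ := by
    intro v
    have hm : u v - v ∈ p :=
      aux_closure_coset (RhatPrime S a0) p (fun a ha => ((hRhatP a).mp ha).2) hu v
    have h := hzorth _ hm
    rw [inner_sub_right] at h
    linarith
  by_cases hE : ∃ v0, v0 ∈ L0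
  · obtain ⟨v0, hv0⟩ := hE
    have hPL0pos : ∀ b ∈ PL S L0, b ∈ S.pos := by
      intro b hb
      rw [PL, Finset.mem_filter] at hb
      rcases hcases b hb.1 with h | h
      · exact h
      · exfalso
        have hlev : -b ∈ RLeviPos S L0 := by
          rw [RLeviPos, Finset.mem_inter, RLevi, Finset.mem_filter]
          exact ⟨⟨hnegR b hb.1, fun v hv w hw => by
            rw [inner_neg_left, inner_neg_left, hb.2 v hv, hb.2 w hw]⟩, h⟩
        have hge := hL0std.2 _ hlev v0 hv0
        rw [inner_neg_left, hb.2 v0 hv0] at hge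
        linarith
    set w : V ≃ₗ[ℝ] V := u * d with hwdef
    have hw : w ∈ S.weyl := Subgroup.mul_mem _ (hWP_le hu) hd
    have hdfacts := hWfacts hd
    have hwfacts := hWfacts hw
    have hmemL : ∀ x, x ∈ L ↔ ∃ y ∈ L0, w y = x := by
      intro x
      rw [hrepr]
      simp only [mapAff, AffineSubspace.mem_map, LinearMap.coe_toAffineMap,
        LinearEquiv.coe_coe]
    have hPLchar : ∀ a, a ∈ PL S L ↔ ∃ b ∈ PL S L0, w b = a := by
      intro a
      simp only [PL, Finset.mem_filter]
      constructor
      · rintro ⟨haR, hav⟩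
        refine ⟨w⁻¹ a, ⟨hwfacts.2.2 a haR, fun v hv => ?_⟩, w.apply_symm_apply a⟩
        have h1 : ⟪w (w⁻¹ a), w v⟫ = ⟪w⁻¹ a, v⟫ := hwfacts.1 _ _
        rw [show w (w⁻¹ a) = a from w.apply_symm_apply a] at h1
        rw [← h1]
        exact hav (w v) ((hmemL (w v)).mpr ⟨v, hv, rfl⟩)
      · rintro ⟨b, ⟨hbR, hbv⟩, rfl⟩
        refine ⟨hwfacts.2.1 b hbR, fun v hv => ?_⟩
        obtain ⟨y, hy, rfl⟩ := (hmemL v).mp hv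
        rw [hwfacts.1 b y]
        exact hbv y hy
    constructor
    · intro h b hb
      have hbR : b ∈ S.Rhat := (Finset.mem_filter.mp hb).1
      have hdbR : d b ∈ S.Rhat := hdfacts.2.1 b hbR
      have hwb : w b ∈ S.pos ∪ RhatPrime S a0 := h _ ((hPLchar (w b)).mpr ⟨b, hb, rfl⟩)
      have hzwb : 0 ≤ ⟪z, w b⟫ := (key _ (hwfacts.2.1 b hbR)).mp hwb
      have hzdb : 0 ≤ ⟪z, d b⟫ := by
        rw [← hucoset (d b)]
        exact hzwb
      have hdb : d b ∈ S.pos ∪ RhatPrime S a0 := (key _ hdbR).mpr hzdb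
      rcases hcases (d b) hdbR with h1 | h1
      · exact h1
      · exfalso
        rcases Finset.mem_union.mp hdb with h2 | h2
        · exact S.pos_neg_disj _ h2 h1
        · have hneg : -(d b) ∈ RhatPrime S a0 :=
            (hRhatP _).mpr ⟨hnegR _ hdbR, p.neg_mem ((hRhatP _).mp h2).2⟩
          have hpp : -(d b) ∈ posPrime S a0 := Finset.mem_inter.mpr ⟨h1, hneg⟩
          have hmin := hdmin _ hpp
          rw [map_neg, d.symm_apply_apply] at hmin
          exact S.pos_neg_disj b (hPL0pos b hb) hmin
    · intro h a ha
      obtain ⟨b, hb, rfl⟩ := (hPLchar a).mp ha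
      have hbR : b ∈ S.Rhat := (Finset.mem_filter.mp hb).1
      apply (key _ (hwfacts.2.1 b hbR)).mpr
      rw [show w b = u (d b) from rfl, hucoset (d b)]
      exact (hposz _ (h b hb)).1
  · push_neg at hE
    have ha0R : a0 ∈ S.Rhat := S.pos_subset (S.simples_subset ha0)
    have hLempty : ∀ x, x ∉ L := by
      intro x hx
      rw [hrepr] at hx
      simp only [mapAff, AffineSubspace.mem_map] at hx
      obtain ⟨y, hy, _⟩ := hx
      exact hE y hy
    apply iff_of_false
    · intro h
      have hmem : -a0 ∈ PL S L := by
        rw [PL, Finset.mem_filter]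
        exact ⟨hnegR a0 ha0R, fun v hv => absurd hv (hLempty v)⟩
      rcases Finset.mem_union.mp (h _ hmem) with h1 | h1
      · exact S.pos_neg_disj a0 (S.simples_subset ha0) h1
      · have hnp : -a0 ∈ p := ((hRhatP _).mp h1).2
        exact ha0p (by simpa using p.neg_mem hnp)
    · intro h
      have hmem : ∀ b ∈ S.Rhat, b ∈ PL S L0 := by
        intro b hb
        rw [PL, Finset.mem_filter]
        exact ⟨hb, fun v hv => absurd hv (hE v)⟩
      have h1 := h a0 (hmem a0 ha0R)
      have h2 := h (-a0) (hmem _ (hnegR a0 ha0R))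
      rw [map_neg] at h2
      exact S.pos_neg_disj _ h1 h2
end
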